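/- arXiv:1805.00256 — 3 statements merged into one kernel-verified Lean document; each statement's English description precedes it below -/
import Mathlib

section
/- Let σ > 0 and ξ < 0, and let F be the CDF of the generalized Pareto distribution GP(σ, ξ). Then the monopoly revenue function R(x) = x·(1 − F(x)) on [0, −σ/ξ] attains its maximum at the unique point r* = σ/(1 − ξ); in particular the optimal reserve price for a GP(σ, ξ) bidder equals the mean σ/(1 − ξ) of the distribution. -/
/-- For the generalized Pareto distribution GP(σ, ξ) with σ > 0, ξ < 0 and CDF
F(x) = 1 - (1 + ξx/σ)^(-1/ξ), the monopoly revenue R(x) = x(1 - F(x)) on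
[0, -σ/ξ] is maximized at the unique point r* = σ/(1-ξ), which equals the mean. -/
theorem gp_monopoly_price (σ ξ : ℝ) (hσ : 0 < σ) (hξ : ξ < 0)
    (F R : ℝ → ℝ)
    (hF : ∀ x, F x = 1 - (1 + ξ*x/σ) ^ (-1/ξ))
    (hR : ∀ x, R x = x * (1 - F x)) :
    σ / (1 - ξ) ∈ Set.Icc (0 : ℝ) (-σ/ξ) ∧
    (∀ x ∈ Set.Icc (0 : ℝ) (-σ/ξ), R x ≤ R (σ / (1 - ξ))) ∧
    (∀ x ∈ Set.Icc (0 : ℝ) (-σ/ξ), R x = R (σ / (1 - ξ)) → x = σ / (1 - ξ)) := by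
  have hξ0 : ξ ≠ 0 := ne_of_lt hξ
  set p : ℝ := -1/ξ with hp_def
  set M : ℝ := -σ/ξ with hM_def
  have hp : 0 < p := by
    rw [hp_def]; rw [div_pos_iff]; right; constructor <;> linarith
  have hM : 0 < M := by
    rw [hM_def]; rw [div_pos_iff]; right; constructor <;> linarith
  set f : ℝ → ℝ := fun x => x * (1 - x/M) ^ p with hf_def
  have harg : ∀ x : ℝ, 1 + ξ*x/σ = 1 - x/M := by
    intro x
    rw [hM_def]
    field_simp [hσ.ne']
    ring
  have hRf : ∀ x, R x = f x := by
    intro x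
    rw [hR, hF, harg, hf_def]
    ring_nf
  have hrM : σ / (1 - ξ) = M / (p + 1) := by
    have h1 : (1:ℝ) - ξ ≠ 0 := by linarith
    have h2 : p + 1 ≠ 0 := by linarith
    rw [div_eq_div_iff h1 h2, hp_def, hM_def]
    field_simp
    ring
  set r : ℝ := M / (p + 1) with hr_def
  have hrpos : 0 < r := div_pos hM (by linarith)
  have hrltM : r < M := div_lt_self hM (by linarith)
  -- continuity
  have hcont : Continuous f := by
    apply Continuous.mul continuous_id
    have h1 : Continuous fun x : ℝ => 1 - x/M := by continuity
    exact h1.rpow_const (fun x => Or.inr hp.le)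
  -- derivative
  have hd : ∀ x : ℝ, x < M →
      HasDerivAt f ((1 - x/M) ^ (p-1) * (1 - (p+1)*x/M)) x := by
    intro x hx
    have hb : 0 < 1 - x/M := by
      rw [sub_pos, div_lt_one hM]; exact hx
    have h1 : HasDerivAt (fun y : ℝ => 1 - y/M) (-(1/M)) x := by
      simpa using ((hasDerivAt_id x).div_const M).const_sub 1
    have h2 : HasDerivAt (fun y : ℝ => (1 - y/M) ^ p)
        (p * (1 - x/M) ^ (p-1) * (-(1/M))) x :=
      HasDerivAt.comp (h := fun y : ℝ => 1 - y/M) x (Real.hasDerivAt_rpow_const (p := p) (Or.inl hb.ne')) h1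
    have h3 := (hasDerivAt_id x).mul h2
    have hsplit : (1 - x/M) ^ p = (1 - x/M) ^ (p-1) * (1 - x/M) := by
      rw [← Real.rpow_add_one hb.ne' (p-1)]; ring_nf
    convert h3 using 1
    · rfl
    · rfl
    · rfl
    rw [hsplit]
    simp only [id]
    have hMne : M ≠ 0 := hM.ne'
    field_simp
    ring
  have hbpos : ∀ x : ℝ, x < M → (0:ℝ) < (1 - x/M) ^ (p-1) := by
    intro x hx
    apply Real.rpow_pos_of_pos
    rw [sub_pos, div_lt_one hM]; exact hx
  -- strict monotonicity on [0, r]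
  have hmono : StrictMonoOn f (Set.Icc 0 r) := by
    apply strictMonoOn_of_deriv_pos (convex_Icc _ _) hcont.continuousOn
    intro x hx
    rw [interior_Icc] at hx
    have hxM : x < M := lt_trans hx.2 hrltM
    rw [(hd x hxM).deriv]
    apply mul_pos (hbpos x hxM)
    have : (p+1) * x < M := by
      have := hx.2
      rw [hr_def, lt_div_iff₀ (by linarith : (0:ℝ) < p + 1)] at this
      linarith
    rw [sub_pos, div_lt_one hM]; exact this
  -- strict antitonicity on [r, M]
  have hanti : StrictAntiOn f (Set.Icc r M) := by
    apply strictAntiOn_of_deriv_neg (convex_Icc _ _) hcont.continuousOn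
    intro x hx
    rw [interior_Icc] at hx
    rw [(hd x hx.2).deriv]
    apply mul_neg_of_pos_of_neg (hbpos x hx.2)
    have : M < (p+1) * x := by
      have := hx.1
      rw [hr_def, div_lt_iff₀ (by linarith : (0:ℝ) < p + 1)] at this
      linarith
    rw [sub_neg, lt_div_iff₀ hM]
    linarith
  have key : ∀ x ∈ Set.Icc (0:ℝ) M, x ≠ r → f x < f r := by
    intro x hx hne
    rcases lt_or_gt_of_ne hne with h | h
    · exact hmono ⟨hx.1, h.le⟩ ⟨hrpos.le, le_refl r⟩ h
    · exact hanti ⟨le_refl r, hrltM.le⟩ ⟨h.le, hx.2⟩ h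
  rw [hrM]
  refine ⟨⟨hrpos.le, hrltM.le⟩, ?_, ?_⟩
  · intro x hx
    rw [hRf, hRf]
    by_cases hne : x = r
    · rw [hne]
    · exact (key x hx hne).le
  · intro x hx heq
    by_contra hne
    rw [hRf, hRf] at heq
    exact absurd heq (ne_of_lt (key x hx hne))
end

section
/- Let F be a CDF with positive continuous density f on an interval (a, b) with F(x) < 1 for x ∈ (a, b), let h : (a, b) → ℝ be continuous, and define g(x) = (∫ₓᵇ h(u)·f(u) du) / (1 − F(x)) for x ∈ (a, b). Then g is differentiable on (a, b) and satisfies the first-order ODE g(x) + g'(x)·(φ(x) − x) = h(x), where φ(x) = x − (1 − F(x))/f(x); equivalently, g(x) − g'(x)·(1 − F(x))/f(x) = h(x). -/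
open MeasureTheory intervalIntegral

/-- The shading function g(x) = (∫ₓᵇ h(u) f(u) du)/(1 - F(x)) solves the ODE
g(x) + g'(x)(φ(x) - x) = h(x), i.e. g(x) - g'(x)(1 - F(x))/f(x) = h(x), where
φ(x) = x - (1 - F(x))/f(x) is the virtual value. -/
theorem shading_ode_solution
    (a b : ℝ) (hab : a < b) (F f h g : ℝ → ℝ)
    (hFderiv : ∀ x ∈ Set.Ioo a b, HasDerivAt F (f x) x)
    (hfcont : ContinuousOn f (Set.Ioo a b))
    (hfpos : ∀ x ∈ Set.Ioo a b, 0 < f x)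
    (hFlt : ∀ x ∈ Set.Ioo a b, F x < 1)
    (hhcont : ContinuousOn h (Set.Ioo a b))
    (hint : ∀ x ∈ Set.Ioo a b, IntervalIntegrable (fun u => h u * f u) volume x b)
    (hg : ∀ x, g x = (∫ u in x..b, h u * f u) / (1 - F x)) :
    ∃ g' : ℝ → ℝ, ∀ x ∈ Set.Ioo a b,
      HasDerivAt g (g' x) x ∧
      g x + g' x * ((x - (1 - F x) / f x) - x) = h x ∧
      g x - g' x * ((1 - F x) / f x) = h x := by
  have hgfun : g = fun x => (∫ u in x..b, h u * f u) / (1 - F x) := funext hg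
  refine ⟨fun x => ((-(h x * f x)) * (1 - F x) -
      (∫ u in x..b, h u * f u) * (-(f x))) / (1 - F x) ^ 2, ?_⟩
  intro x hx
  have hF1 : 1 - F x ≠ 0 := by have := hFlt x hx; linarith
  have hfne : f x ≠ 0 := ne_of_gt (hfpos x hx)
  have hmemnhds : Set.Ioo a b ∈ nhds x := isOpen_Ioo.mem_nhds hx
  have hcontAt : ContinuousAt (fun u => h u * f u) x :=
    ((hhcont.mul hfcont).continuousAt hmemnhds)
  have hI : HasDerivAt (fun y => ∫ u in y..b, h u * f u) (-(h x * f x)) x :=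
    intervalIntegral.integral_hasDerivAt_left (hint x hx)
      ((hhcont.mul hfcont).stronglyMeasurableAtFilter isOpen_Ioo x hx) hcontAt
  have hden : HasDerivAt (fun y => 1 - F y) (-(f x)) x := by
    exact ((hasDerivAt_const x (1:ℝ)).sub (hFderiv x hx)).congr_deriv (by ring)
  have hder : HasDerivAt g (((-(h x * f x)) * (1 - F x) -
      (∫ u in x..b, h u * f u) * (-(f x))) / (1 - F x) ^ 2) x := by
    rw [hgfun]; exact hI.div hden hF1
  refine ⟨hder, ?_, ?_⟩ <;> simp only [] <;> rw [hg x] <;> field_simp <;> ring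
end

section
/- Let K ≥ 2, let F be a CDF with positive continuous density f on (0, ω) with F(0) = 0 and F(ω) = 1, and let β(x) = (∫₀ˣ y·(K − 1)·F(y)^{K−2}·f(y) dy)/F(x)^{K−1} be the symmetric first-price equilibrium bid. Define the shading g(x) = (∫ₓ^ω β(u)·f(u) du)/(1 − F(x)) = E[β(X) | X ≥ x]. Then g is differentiable on (0, ω) and satisfies g(x) + g'(x)·(φ(x) − x) = β(x), where φ(x) = x − (1 − F(x))/f(x) is the virtual value; i.e., a bidder shading her value x₁ to g(x₁) submits a bid whose virtual value equals her first-price bid β(x₁). -/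
open MeasureTheory intervalIntegral

/-- Main equilibrium lemma: with β the symmetric first-price equilibrium bid and
shading g(x) = E[β(X) | X ≥ x], the virtual value of the shaded bid equals the
first-price bid: g(x) + g'(x)(φ(x) - x) = β(x), where φ(x) = x - (1-F(x))/f(x). -/
theorem myerson_equilibrium_shading
    (K : ℕ) (hK : 2 ≤ K) (b : ℝ) (hb : 0 < b) (F f β g : ℝ → ℝ)
    (hF0 : F 0 = 0) (hFb : F b = 1)
    (hFderiv : ∀ x ∈ Set.Ioo (0 : ℝ) b, HasDerivAt F (f x) x)
    (hfcont : ContinuousOn f (Set.Ioo 0 b))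
    (hfpos : ∀ x ∈ Set.Ioo (0 : ℝ) b, 0 < f x)
    (hFpos : ∀ x ∈ Set.Ioo (0 : ℝ) b, 0 < F x)
    (hFlt : ∀ x ∈ Set.Ioo (0 : ℝ) b, F x < 1)
    (hβ : ∀ x, β x = (∫ y in (0 : ℝ)..x, y * ((K : ℝ) - 1) * F y ^ (K - 2) * f y)
        / F x ^ (K - 1))
    (hint : ∀ x ∈ Set.Ioo (0 : ℝ) b,
      IntervalIntegrable (fun u => β u * f u) volume x b)
    (hg : ∀ x, g x = (∫ u in x..b, β u * f u) / (1 - F x)) :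
    ∃ g' : ℝ → ℝ, ∀ x ∈ Set.Ioo (0 : ℝ) b,
      HasDerivAt g (g' x) x ∧
      g x + g' x * ((x - (1 - F x) / f x) - x) = β x := by
  classical
  set φK : ℝ → ℝ := fun y => y * ((K : ℝ) - 1) * F y ^ (K - 2) * f y with hφK
  have hFcont : ContinuousOn F (Set.Ioo 0 b) := fun x hx =>
    (hFderiv x hx).continuousAt.continuousWithinAt
  have hφKcont : ContinuousOn φK (Set.Ioo 0 b) :=
    ((continuousOn_id.mul continuousOn_const).mul (hFcont.pow _)).mul hfcont
  -- continuity of the numerator integral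
  have hNcont : ∀ x ∈ Set.Ioo (0 : ℝ) b,
      ContinuousAt (fun t => ∫ y in (0:ℝ)..t, φK y) x := by
    intro x hx
    obtain ⟨hx0, hxb⟩ := hx
    set c := x / 2 with hc
    have hc0 : 0 < c := by positivity
    have hcx : c < x := by linarith
    have hcb : c < b := by linarith
    have hmem : Set.Ioo c b ∈ nhds x := (isOpen_Ioo).mem_nhds ⟨hcx, hxb⟩
    by_cases hI : IntervalIntegrable φK volume 0 c
    · have hct : ∀ t ∈ Set.Ioo c b, IntervalIntegrable φK volume c t := by
        intro t ht
        apply ContinuousOn.intervalIntegrable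
        apply hφKcont.mono
        rw [Set.uIcc_of_le (le_of_lt ht.1)]
        exact fun y hy => ⟨lt_of_lt_of_le hc0 hy.1, lt_of_le_of_lt hy.2 ht.2⟩
      have hder : HasDerivAt (fun t => ∫ y in c..t, φK y) (φK x) x := by
        apply intervalIntegral.integral_hasDerivAt_right (hct x ⟨hcx, hxb⟩)
        · exact hφKcont.stronglyMeasurableAtFilter isOpen_Ioo _ ⟨hx0, hxb⟩
        · exact hφKcont.continuousAt (isOpen_Ioo.mem_nhds ⟨hx0, hxb⟩)
      have hcont2 : ContinuousAt
          (fun t => (∫ y in (0:ℝ)..c, φK y) + ∫ y in c..t, φK y) x :=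
        continuousAt_const.add hder.continuousAt
      apply hcont2.congr
      filter_upwards [hmem] with t ht
      exact intervalIntegral.integral_add_adjacent_intervals hI (hct t ht)
    · have hz : (fun t => ∫ y in (0:ℝ)..t, φK y) =ᶠ[nhds x] fun _ => (0:ℝ) := by
        filter_upwards [hmem] with t ht
        apply intervalIntegral.integral_undef
        intro h
        refine hI (h.mono_set ?_)
        rw [Set.uIcc_of_le (le_of_lt hc0), Set.uIcc_of_le (le_of_lt (lt_trans hc0 ht.1))]
        exact Set.Icc_subset_Icc le_rfl ht.1.le
      exact continuousAt_const.congr hz.symm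
  have hβcont : ∀ x ∈ Set.Ioo (0 : ℝ) b, ContinuousAt β x := by
    intro x hx
    have hβeq : β = fun t => (∫ y in (0:ℝ)..t, φK y) / F t ^ (K - 1) := funext hβ
    rw [hβeq]
    exact (hNcont x hx).div ((hFderiv x hx).continuousAt.pow _)
      (pow_ne_zero _ (ne_of_gt (hFpos x hx)))
  have hβfcont : ContinuousOn (fun u => β u * f u) (Set.Ioo 0 b) := fun x hx =>
    ((hβcont x hx).mul (hfcont.continuousAt (isOpen_Ioo.mem_nhds hx))).continuousWithinAt
  refine ⟨fun x => (-(β x * f x) * (1 - F x) -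
      (∫ u in x..b, β u * f u) * -(f x)) / (1 - F x) ^ 2, ?_⟩
  intro x hx
  have hD0 : (1 : ℝ) - F x ≠ 0 := by
    have := hFlt x hx; linarith
  have hf0 : f x ≠ 0 := ne_of_gt (hfpos x hx)
  have hH2 : HasDerivAt (fun t => ∫ u in b..t, β u * f u) (β x * f x) x := by
    apply intervalIntegral.integral_hasDerivAt_right (hint x hx).symm
    · exact hβfcont.stronglyMeasurableAtFilter isOpen_Ioo _ hx
    · exact hβfcont.continuousAt (isOpen_Ioo.mem_nhds hx)
  have hH : HasDerivAt (fun t => ∫ u in t..b, β u * f u) (-(β x * f x)) x := by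
    have heq : (fun t => ∫ u in t..b, β u * f u)
        = fun t => -(∫ u in b..t, β u * f u) := by
      funext t; rw [intervalIntegral.integral_symm]
    rw [heq]; exact hH2.neg
  have hD : HasDerivAt (fun t => 1 - F t) (-(f x)) x := by
    have h := (hasDerivAt_const x (1:ℝ)).sub (hFderiv x hx)
    rw [zero_sub] at h; exact h
  have hgeq : g = fun t => (∫ u in t..b, β u * f u) / (1 - F t) := funext hg
  constructor
  · rw [hgeq]; exact hH.div hD hD0
  · rw [hg x]
    field_simp
    ring
end
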